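/- Let u be a complex-valued C^2 function on a domain in R^d and A a real C^1 vector field. If (D + A)^2 u = 0, where D = -i∇, then for every ε > 0 the function u_ε = sqrt(|u|^2 + ε^2) satisfies Δu_ε ≥ 0 (i.e. u_ε is subharmonic). -/

import Mathlib

open Metric Set

noncomputable def pd {d : ℕ} (f : EuclideanSpace ℝ (Fin d) → ℂ) (j : Fin d)
    (x : EuclideanSpace ℝ (Fin d)) : ℂ :=
  fderiv ℝ f x (EuclideanSpace.single j 1)

noncomputable def pdR {d : ℕ} (f : EuclideanSpace ℝ (Fin d) → ℝ) (j : Fin d)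
    (x : EuclideanSpace ℝ (Fin d)) : ℝ :=
  fderiv ℝ f x (EuclideanSpace.single j 1)

/-- The magnetic derivative `(D_j + A_j) f` where `D = -i∇`. -/
noncomputable def magD {d : ℕ} (A : EuclideanSpace ℝ (Fin d) → EuclideanSpace ℝ (Fin d))
    (f : EuclideanSpace ℝ (Fin d) → ℂ) (j : Fin d) (x : EuclideanSpace ℝ (Fin d)) : ℂ :=
  -Complex.I * pd f j x + (A x j : ℂ) * f x

/-- The magnetic Laplacian `(D+A)^2 f = Σ_j (D_j+A_j)(D_j+A_j) f`. -/
noncomputable def magLap {d : ℕ} (A : EuclideanSpace ℝ (Fin d) → EuclideanSpace ℝ (Fin d))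
    (f : EuclideanSpace ℝ (Fin d) → ℂ) (x : EuclideanSpace ℝ (Fin d)) : ℂ :=
  ∑ j, (-Complex.I * pd (fun y => magD A f j y) j x + (A x j : ℂ) * magD A f j x)

section AuxPD

variable {d : ℕ} {j : Fin d} {x : EuclideanSpace ℝ (Fin d)}

lemma pd_addL {f g : EuclideanSpace ℝ (Fin d) → ℂ} (hf : DifferentiableAt ℝ f x)
    (hg : DifferentiableAt ℝ g x) :
    pd (fun y => f y + g y) j x = pd f j x + pd g j x := by
  simp only [pd]
  have hc : HasFDerivAt (fun y => f y + g y) (fderiv ℝ f x + fderiv ℝ g x) x :=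
    hf.hasFDerivAt.add hg.hasFDerivAt
  rw [hc.fderiv]
  rfl

lemma pd_cmul {f : EuclideanSpace ℝ (Fin d) → ℂ} (c : ℂ) (hf : DifferentiableAt ℝ f x) :
    pd (fun y => c * f y) j x = c * pd f j x := by
  simp [pd, fderiv_const_mul hf c]

lemma pd_mulL {f g : EuclideanSpace ℝ (Fin d) → ℂ} (hf : DifferentiableAt ℝ f x)
    (hg : DifferentiableAt ℝ g x) :
    pd (fun y => f y * g y) j x = pd f j x * g x + f x * pd g j x := by
  simp only [pd]
  have hc : HasFDerivAt (fun y => f y * g y) _ x := hf.hasFDerivAt.mul hg.hasFDerivAt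
  rw [hc.fderiv]
  simp [smul_eq_mul]
  ring

lemma pd_conjL {f : EuclideanSpace ℝ (Fin d) → ℂ} (hf : DifferentiableAt ℝ f x) :
    pd (fun y => (starRingEnd ℂ) (f y)) j x = (starRingEnd ℂ) (pd f j x) := by
  have h := ((Complex.conjCLE.toContinuousLinearMap.hasFDerivAt).comp x hf.hasFDerivAt).fderiv
  simp only [pd]
  rw [show (fun y => (starRingEnd ℂ) (f y)) = (Complex.conjCLE.toContinuousLinearMap ∘ f) from rfl, h]
  simp

lemma pdR_reL {F : EuclideanSpace ℝ (Fin d) → ℂ} (hF : DifferentiableAt ℝ F x) :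
    pdR (fun y => (F y).re) j x = (pd F j x).re := by
  have h := ((Complex.reCLM.hasFDerivAt).comp x hF.hasFDerivAt).fderiv
  simp only [pdR, pd]
  rw [show (fun y => (F y).re) = (Complex.reCLM ∘ F) from rfl, h]
  simp

lemma pd_ofRealL {g : EuclideanSpace ℝ (Fin d) → ℝ} (hg : DifferentiableAt ℝ g x) :
    pd (fun y => ((g y : ℝ) : ℂ)) j x = ((pdR g j x : ℝ) : ℂ) := by
  have h := ((Complex.ofRealCLM.hasFDerivAt).comp x hg.hasFDerivAt).fderiv
  simp only [pd, pdR]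
  rw [show (fun y => ((g y : ℝ) : ℂ)) = (Complex.ofRealCLM ∘ g) from rfl, h]
  simp

lemma pdR_add_const {g : EuclideanSpace ℝ (Fin d) → ℝ} (c : ℝ) :
    pdR (fun y => g y + c) j x = pdR g j x := by
  simp [pdR, fderiv_add_const]

lemma pdR_cmul {g : EuclideanSpace ℝ (Fin d) → ℝ} (c : ℝ) (hg : DifferentiableAt ℝ g x) :
    pdR (fun y => c * g y) j x = c * pdR g j x := by
  simp [pdR, fderiv_const_mul hg c]

lemma pdR_mulR {g h : EuclideanSpace ℝ (Fin d) → ℝ} (hg : DifferentiableAt ℝ g x)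
    (hh : DifferentiableAt ℝ h x) :
    pdR (fun y => g y * h y) j x = pdR g j x * h x + g x * pdR h j x := by
  simp only [pdR]
  have hc : HasFDerivAt (fun y => g y * h y) _ x := hg.hasFDerivAt.mul hh.hasFDerivAt
  rw [hc.fderiv]
  simp [smul_eq_mul]; ring

lemma pdR_invR {h : EuclideanSpace ℝ (Fin d) → ℝ} (hh : DifferentiableAt ℝ h x)
    (hne : h x ≠ 0) :
    pdR (fun y => (h y)⁻¹) j x = -pdR h j x / (h x)^2 := by
  have hc := ((hasDerivAt_inv hne).comp_hasFDerivAt x hh.hasFDerivAt).fderiv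
  simp only [pdR]
  rw [show (fun y => (h y)⁻¹) = ((fun t : ℝ => t⁻¹) ∘ h) from rfl, hc]
  simp [smul_eq_mul]
  ring

lemma pdR_divL {g h : EuclideanSpace ℝ (Fin d) → ℝ} (hg : DifferentiableAt ℝ g x)
    (hh : DifferentiableAt ℝ h x) (hne : h x ≠ 0) :
    pdR (fun y => g y / h y) j x
      = (pdR g j x * h x - g x * pdR h j x) / (h x)^2 := by
  have h1 : (fun y => g y / h y) = fun y => g y * (h y)⁻¹ := by
    funext y; rw [div_eq_mul_inv]
  rw [h1, pdR_mulR (h := fun y => (h y)⁻¹) hg (hh.inv hne), pdR_invR hh hne]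
  field_simp
  ring

lemma diff_sqrtQ {Q : EuclideanSpace ℝ (Fin d) → ℝ} (hQ : DifferentiableAt ℝ Q x)
    (hne : Q x ≠ 0) : DifferentiableAt ℝ (fun z => Real.sqrt (Q z)) x :=
  ((Real.hasDerivAt_sqrt hne).comp_hasFDerivAt x hQ.hasFDerivAt).differentiableAt

lemma pdR_sqrt {Q : EuclideanSpace ℝ (Fin d) → ℝ} (hQ : DifferentiableAt ℝ Q x)
    (hne : Q x ≠ 0) :
    pdR (fun z => Real.sqrt (Q z)) j x = pdR Q j x / (2 * Real.sqrt (Q x)) := by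
  have hc := ((Real.hasDerivAt_sqrt hne).comp_hasFDerivAt x hQ.hasFDerivAt).fderiv
  simp only [pdR]
  rw [show (fun z => Real.sqrt (Q z)) = (Real.sqrt ∘ Q) from rfl, hc]
  simp [smul_eq_mul]
  ring

lemma keyre (U F G : ℂ) (a a' : ℝ) :
    ((starRingEnd ℂ) U * (-Complex.I * (-Complex.I * G + (a' : ℂ) * U + (a : ℂ) * F)
      + (a : ℂ) * (-Complex.I * F + (a : ℂ) * U))).re
    = -((starRingEnd ℂ) U * G).re + (2 * a * ((starRingEnd ℂ) U * F).im
      + a ^ 2 * ((starRingEnd ℂ) U * U).re) := by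
  simp [Complex.mul_re, Complex.mul_im, Complex.add_re, Complex.add_im,
    Complex.conj_re, Complex.conj_im]
  ring

lemma keyineq (U F : ℂ) (a Qv : ℝ) (hQ : ((starRingEnd ℂ) U * U).re ≤ Qv) :
    (2 * ((starRingEnd ℂ) U * F).re) ^ 2
      ≤ 4 * Qv * (((starRingEnd ℂ) F * F).re + (2 * a * ((starRingEnd ℂ) U * F).im
          + a ^ 2 * ((starRingEnd ℂ) U * U).re)) := by
  obtain ⟨p, q⟩ := U
  obtain ⟨fr, fi⟩ := F
  simp [Complex.mul_re, Complex.mul_im, Complex.conj_re, Complex.conj_im] at *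
  nlinarith [sq_nonneg (p*fi - q*fr + a*(p^2+q^2)), sq_nonneg (fi + a*p), sq_nonneg (fr - a*q),
    mul_nonneg (sub_nonneg.2 hQ) (add_nonneg (sq_nonneg (fi + a*p)) (sq_nonneg (fr - a*q))),
    sq_nonneg p, sq_nonneg q]

lemma norm_sq_re (w : ℂ) : ‖w‖ ^ 2 = ((starRingEnd ℂ) w * w).re := by
  rw [← Complex.normSq_eq_norm_sq, Complex.normSq_apply]
  simp [Complex.mul_re, Complex.conj_re, Complex.conj_im]

lemma re_conj_sym (a b : ℂ) :
    ((starRingEnd ℂ) a * b + (starRingEnd ℂ) b * a).re = 2 * ((starRingEnd ℂ) b * a).re := by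
  simp [Complex.mul_re, Complex.conj_re, Complex.conj_im]
  ring

end AuxPD

/-- if `(D+A)^2 u = 0` on a domain, then `u_ε = sqrt(|u|^2+ε^2)` is
subharmonic, i.e. `Δ u_ε ≥ 0` on the domain. -/
theorem stmt0 {d : ℕ} (Ω : Set (EuclideanSpace ℝ (Fin d))) (hΩ : IsOpen Ω)
    (u : EuclideanSpace ℝ (Fin d) → ℂ)
    (A : EuclideanSpace ℝ (Fin d) → EuclideanSpace ℝ (Fin d))
    (hu : ContDiffOn ℝ 2 u Ω) (hA : ContDiffOn ℝ 1 A Ω)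
    (heq : ∀ x ∈ Ω, magLap A u x = 0) (ε : ℝ) (hε : 0 < ε) :
    ∀ x ∈ Ω,
      0 ≤ ∑ j, pdR (fun y => pdR (fun z => Real.sqrt (‖u z‖ ^ 2 + ε ^ 2)) j y) j x := by
  intro x hx
  have hΩx : Ω ∈ nhds x := hΩ.mem_nhds hx
  -- basic differentiability facts
  have hud : ∀ y ∈ Ω, DifferentiableAt ℝ u y := fun y hy =>
    (hu.contDiffAt (hΩ.mem_nhds hy)).differentiableAt (by norm_num)
  have hfd : ∀ (j : Fin d), ∀ y ∈ Ω,
      DifferentiableAt ℝ (fun z => pd u j z) y := by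
    intro j y hy
    have h1 : ContDiffAt ℝ 1 (fderiv ℝ u) y :=
      (hu.contDiffAt (hΩ.mem_nhds hy)).fderiv_right (by norm_num : (1 : WithTop ℕ∞) + 1 ≤ 2)
    exact (h1.differentiableAt (by norm_num)).clm_apply (differentiableAt_const _)
  have hconjd : ∀ y ∈ Ω, DifferentiableAt ℝ (fun z => (starRingEnd ℂ) (u z)) y := fun y hy =>
    (Complex.conjCLE.toContinuousLinearMap.differentiableAt).comp y (hud y hy)
  have hAd : ∀ (j : Fin d), ∀ y ∈ Ω, DifferentiableAt ℝ (fun z => A z j) y := fun j y hy =>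
    ((EuclideanSpace.proj (𝕜 := ℝ) (i := j)).differentiableAt).comp y
      ((hA.contDiffAt (hΩ.mem_nhds hy)).differentiableAt (by norm_num))
  -- the function Q
  set Q : EuclideanSpace ℝ (Fin d) → ℝ :=
    fun z => ((starRingEnd ℂ) (u z) * u z).re + ε ^ 2 with hQdef
  have hQ8 : ∀ z, ‖u z‖ ^ 2 + ε ^ 2 = Q z := fun z => by rw [norm_sq_re]
  have hQpos : ∀ z, 0 < Q z := fun z => by
    show 0 < ((starRingEnd ℂ) (u z) * u z).re + ε ^ 2
    rw [← norm_sq_re]; positivity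
  have hQd : ∀ y ∈ Ω, DifferentiableAt ℝ Q y := by
    intro y hy
    exact (Complex.reCLM.differentiableAt.comp y ((hconjd y hy).mul (hud y hy))).add_const _
  have hQval : ∀ j : Fin d, ∀ y ∈ Ω,
      pdR Q j y = 2 * ((starRingEnd ℂ) (u y) * pd u j y).re := by
    intro j y hy
    have h1 : pdR Q j y = pdR (fun z => ((starRingEnd ℂ) (u z) * u z).re) j y :=
      pdR_add_const _
    rw [h1, pdR_reL (F := fun z => (starRingEnd ℂ) (u z) * u z) ((hconjd y hy).mul (hud y hy)),
      pd_mulL (hconjd y hy) (hud y hy), pd_conjL (hud y hy)]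
    exact re_conj_sym _ _
  have hsval : ∀ j : Fin d, ∀ y ∈ Ω,
      pdR (fun z => Real.sqrt (Q z)) j y
        = (2 * ((starRingEnd ℂ) (u y) * pd u j y).re) / (2 * Real.sqrt (Q y)) := by
    intro j y hy
    rw [pdR_sqrt (hQd y hy) (ne_of_gt (hQpos y)), hQval j y hy]
  -- rewrite the target using Q
  simp only [hQ8]
  -- notation at the point x
  set s : ℝ := Real.sqrt (Q x) with hsdef
  have hs0 : 0 < s := Real.sqrt_pos.2 (hQpos x)
  have hs2 : s ^ 2 = Q x := Real.sq_sqrt (le_of_lt (hQpos x))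
  have hQle : ((starRingEnd ℂ) (u x) * u x).re ≤ Q x := by
    show ((starRingEnd ℂ) (u x) * u x).re ≤ ((starRingEnd ℂ) (u x) * u x).re + ε ^ 2
    nlinarith [sq_nonneg ε]
  -- second derivative formula
  have hterm : ∀ j : Fin d,
      pdR (fun y => pdR (fun z => Real.sqrt (Q z)) j y) j x
        = (4 * Q x * (((starRingEnd ℂ) (pd u j x) * pd u j x).re
              + ((starRingEnd ℂ) (u x) * pd (fun z => pd u j z) j x).re)
            - (2 * ((starRingEnd ℂ) (u x) * pd u j x).re) ^ 2) / (4 * Q x * s) := by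
    intro j
    have hEE : (fun y => pdR (fun z => Real.sqrt (Q z)) j y)
        =ᶠ[nhds x] (fun y => (2 * ((starRingEnd ℂ) (u y) * pd u j y).re)
            / (2 * Real.sqrt (Q y))) :=
      Filter.eventuallyEq_of_mem hΩx (fun y hy => hsval j y hy)
    have h2 : pdR (fun y => pdR (fun z => Real.sqrt (Q z)) j y) j x
        = pdR (fun y => (2 * ((starRingEnd ℂ) (u y) * pd u j y).re)
            / (2 * Real.sqrt (Q y))) j x :=
      congrArg (fun (L : EuclideanSpace ℝ (Fin d) →L[ℝ] ℝ) => L (EuclideanSpace.single j 1))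
        hEE.fderiv_eq
    -- differentiabilities at x
    have hgd : DifferentiableAt ℝ
        (fun y => 2 * ((starRingEnd ℂ) (u y) * pd u j y).re) x := by
      exact (Complex.reCLM.differentiableAt.comp x
        ((hconjd x hx).mul (hfd j x hx))).const_mul 2
    have hhd : DifferentiableAt ℝ (fun y => 2 * Real.sqrt (Q y)) x :=
      (diff_sqrtQ (hQd x hx) (ne_of_gt (hQpos x))).const_mul 2
    have hhne : (2 : ℝ) * Real.sqrt (Q x) ≠ 0 := by positivity
    rw [h2, pdR_divL hgd hhd hhne]
    -- compute the two partial derivatives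
    have hgre : DifferentiableAt ℝ (fun y => ((starRingEnd ℂ) (u y) * pd u j y).re) x := by
      exact Complex.reCLM.differentiableAt.comp x ((hconjd x hx).mul (hfd j x hx))
    have hmuld : DifferentiableAt ℝ (fun y => (starRingEnd ℂ) (u y) * pd u j y) x := by
      exact (hconjd x hx).mul (hfd j x hx)
    have hpg : pdR (fun y => 2 * ((starRingEnd ℂ) (u y) * pd u j y).re) j x
        = 2 * (((starRingEnd ℂ) (pd u j x) * pd u j x).re
            + ((starRingEnd ℂ) (u x) * pd (fun z => pd u j z) j x).re) := by
      rw [pdR_cmul 2 hgre,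
        pdR_reL (F := fun y => (starRingEnd ℂ) (u y) * pd u j y) hmuld,
        pd_mulL (f := fun z => (starRingEnd ℂ) (u z)) (g := fun z => pd u j z)
          (hconjd x hx) (hfd j x hx),
        pd_conjL (hud x hx)]
      rw [Complex.add_re]
    have hph : pdR (fun y => 2 * Real.sqrt (Q y)) j x
        = (2 * ((starRingEnd ℂ) (u x) * pd u j x).re) / s := by
      rw [pdR_cmul 2 (diff_sqrtQ (hQd x hx) (ne_of_gt (hQpos x))),
        pdR_sqrt (hQd x hx) (ne_of_gt (hQpos x)), hQval j x hx]
      rw [← hsdef]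
      field_simp
    rw [hpg, hph, ← hsdef, ← hs2]
    field_simp
    ring
  -- differentiability of the complexified coordinates of A
  have hAc : ∀ j : Fin d, DifferentiableAt ℝ (fun z => ((A z j : ℝ) : ℂ)) x := fun j => by
    exact Complex.ofRealCLM.differentiableAt.comp x (hAd j x hx)
  -- expansion of the magnetic derivative's derivative
  have hmag : ∀ j : Fin d, pd (fun y => magD A u j y) j x
      = -Complex.I * pd (fun z => pd u j z) j x
        + ((pdR (fun z => A z j) j x : ℝ) : ℂ) * u x
        + ((A x j : ℝ) : ℂ) * pd u j x := by
    intro j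
    simp only [magD]
    rw [pd_addL (f := fun y => -Complex.I * pd u j y)
        (g := fun y => ((A y j : ℝ) : ℂ) * u y)
        ((hfd j x hx).const_mul _) ((hAc j).mul (hud x hx)),
      pd_cmul (-Complex.I) (hfd j x hx),
      pd_mulL (f := fun z => ((A z j : ℝ) : ℂ)) (g := u) (hAc j) (hud x hx),
      pd_ofRealL (hAd j x hx)]
    ring
  -- the equation, multiplied by conj u and expanded
  have hsum0 : ∑ j, ((starRingEnd ℂ) (u x)
      * (-Complex.I * (-Complex.I * pd (fun z => pd u j z) j x
          + ((pdR (fun z => A z j) j x : ℝ) : ℂ) * u x + ((A x j : ℝ) : ℂ) * pd u j x)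
        + ((A x j : ℝ) : ℂ) * (-Complex.I * pd u j x + ((A x j : ℝ) : ℂ) * u x))) = 0 := by
    have h1 : ∑ j, ((starRingEnd ℂ) (u x)
        * (-Complex.I * pd (fun y => magD A u j y) j x
            + ((A x j : ℝ) : ℂ) * magD A u j x)) = 0 := by
      rw [← Finset.mul_sum]
      have h2 : ∑ j, (-Complex.I * pd (fun y => magD A u j y) j x
          + ((A x j : ℝ) : ℂ) * magD A u j x) = magLap A u x := rfl
      rw [h2, heq x hx, mul_zero]
    rw [← h1]
    apply Finset.sum_congr rfl
    intro j _
    rw [hmag j]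
    simp only [magD]
  have e2 : ∑ j, (-(((starRingEnd ℂ) (u x)) * pd (fun z => pd u j z) j x).re
      + (2 * (A x j) * ((starRingEnd ℂ) (u x) * pd u j x).im
        + (A x j) ^ 2 * ((starRingEnd ℂ) (u x) * u x).re)) = 0 := by
    have h3 : (∑ j, ((starRingEnd ℂ) (u x)
        * (-Complex.I * (-Complex.I * pd (fun z => pd u j z) j x
            + ((pdR (fun z => A z j) j x : ℝ) : ℂ) * u x + ((A x j : ℝ) : ℂ) * pd u j x)
          + ((A x j : ℝ) : ℂ) * (-Complex.I * pd u j x + ((A x j : ℝ) : ℂ) * u x)))).re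
        = 0 := by rw [hsum0]; rfl
    rw [Complex.re_sum] at h3
    rw [← h3]
    apply Finset.sum_congr rfl
    intro j _
    exact (keyre (u x) (pd u j x) (pd (fun z => pd u j z) j x) (A x j)
      (pdR (fun z => A z j) j x)).symm
  have hkey : ∑ j, ((starRingEnd ℂ) (u x) * pd (fun z => pd u j z) j x).re
      = ∑ j, (2 * (A x j) * ((starRingEnd ℂ) (u x) * pd u j x).im
          + (A x j) ^ 2 * ((starRingEnd ℂ) (u x) * u x).re) := by
    rw [Finset.sum_add_distrib] at e2
    rw [Finset.sum_neg_distrib] at e2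
    linarith
  -- assemble
  have htot : ∑ j, pdR (fun y => pdR (fun z => Real.sqrt (Q z)) j y) j x
      = (∑ j, (4 * Q x * (((starRingEnd ℂ) (pd u j x) * pd u j x).re
            + (2 * (A x j) * ((starRingEnd ℂ) (u x) * pd u j x).im
              + (A x j) ^ 2 * ((starRingEnd ℂ) (u x) * u x).re))
          - (2 * ((starRingEnd ℂ) (u x) * pd u j x).re) ^ 2)) / (4 * Q x * s) := by
    rw [Finset.sum_div]
    rw [Finset.sum_congr rfl (fun j _ => hterm j)]
    have l1 : ∀ (w : Fin d → ℝ),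
        ∑ j, ((4 * Q x * (((starRingEnd ℂ) (pd u j x) * pd u j x).re + w j)
            - (2 * ((starRingEnd ℂ) (u x) * pd u j x).re) ^ 2) / (4 * Q x * s))
        = ∑ j, ((4 * Q x * ((starRingEnd ℂ) (pd u j x) * pd u j x).re
            - (2 * ((starRingEnd ℂ) (u x) * pd u j x).re) ^ 2) / (4 * Q x * s))
          + (4 * Q x / (4 * Q x * s)) * ∑ j, w j := by
      intro w
      rw [Finset.mul_sum, ← Finset.sum_add_distrib]
      apply Finset.sum_congr rfl
      intro j _
      ring
    rw [l1, l1, hkey]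
  rw [htot]
  apply div_nonneg
  · apply Finset.sum_nonneg
    intro j _
    have := keyineq (u x) (pd u j x) (A x j) (Q x) hQle
    linarith
  · exact le_of_lt (mul_pos (mul_pos (by norm_num) (hQpos x)) hs0)
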